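/- For random variables J_1, …, J_m and G on a finite probability space, I((J_1, …, J_m) ∧ G) ≤ Σ_{i=1}^m I(J_i ∧ (G, J_1, …, J_{i−1}, J_{i+1}, …, J_m)). -/

import Mathlib

open Finset

namespace SC

variable {Ω : Type*} [Fintype Ω]

/-- A probability mass function on a finite sample space. -/
structure FinPMF (Ω : Type*) [Fintype Ω] where
  p : Ω → ℝ
  nonneg : ∀ ω, 0 ≤ p ω
  sum_one : ∑ ω, p ω = 1

/-- Probability of an event. -/
noncomputable def prob (μ : FinPMF Ω) (E : Set Ω) : ℝ :=
  ∑ ω, E.indicator μ.p ω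

/-- Distribution (law) of a random variable. -/
noncomputable def dist (μ : FinPMF Ω) {α : Type*} (X : Ω → α) (a : α) : ℝ :=
  prob μ {ω | X ω = a}

/-- Shannon entropy (base 2) of a finite-valued random variable. -/
noncomputable def H (μ : FinPMF Ω) {α : Type*} [Fintype α] (X : Ω → α) : ℝ :=
  -∑ a, dist μ X a * Real.logb 2 (dist μ X a)

/-- Mutual information I(X ∧ Y). -/
noncomputable def mutInf (μ : FinPMF Ω) {α β : Type*} [Fintype α] [Fintype β]
    (X : Ω → α) (Y : Ω → β) : ℝ :=
  H μ X + H μ Y - H μ (fun ω => (X ω, Y ω))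

/-- Conditional entropy H(X | Y). -/
noncomputable def condH (μ : FinPMF Ω) {α β : Type*} [Fintype α] [Fintype β]
    (X : Ω → α) (Y : Ω → β) : ℝ :=
  H μ (fun ω => (X ω, Y ω)) - H μ Y

/-- Conditional mutual information I(X ∧ Y | Z). -/
noncomputable def condMutInf (μ : FinPMF Ω) {α β γ : Type*}
    [Fintype α] [Fintype β] [Fintype γ]
    (X : Ω → α) (Y : Ω → β) (Z : Ω → γ) : ℝ :=
  H μ (fun ω => (X ω, Z ω)) + H μ (fun ω => (Y ω, Z ω))
    - H μ (fun ω => (X ω, Y ω, Z ω)) - H μ Z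

/-- Independence of two random variables: the joint law factorizes. -/
def IndepRV (μ : FinPMF Ω) {α β : Type*} (X : Ω → α) (Y : Ω → β) : Prop :=
  ∀ a b, dist μ (fun ω => (X ω, Y ω)) (a, b) = dist μ X a * dist μ Y b

/-- Kullback–Leibler divergence (base 2) between two pmfs on a finite set. -/
noncomputable def klDiv {α : Type*} [Fintype α] (P Q : α → ℝ) : ℝ :=
  ∑ a, P a * Real.logb 2 (P a / Q a)

/-- The binary entropy function (base 2). -/
noncomputable def binH (x : ℝ) : ℝ :=
  -x * Real.logb 2 x - (1 - x) * Real.logb 2 (1 - x)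

end SC

set_option linter.unusedSectionVars false

namespace SC

variable {Ω : Type*} [Fintype Ω] (μ : FinPMF Ω)

open Classical in
lemma dist_eq {α : Type*} (X : Ω → α) (a : α) :
    dist μ X a = ∑ ω, if X ω = a then μ.p ω else 0 := by
  unfold dist prob
  refine Finset.sum_congr rfl fun ω _ => ?_
  rw [Set.indicator_apply]
  simp [Set.mem_setOf_eq]

lemma dist_nonneg' {α : Type*} (X : Ω → α) (a : α) : 0 ≤ dist μ X a := by
  classical
  rw [dist_eq]
  refine Finset.sum_nonneg fun ω _ => ?_
  split
  · exact μ.nonneg ω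
  · exact le_refl 0

lemma sum_dist {α : Type*} [Fintype α] (X : Ω → α) : ∑ a, dist μ X a = 1 := by
  classical
  simp_rw [dist_eq]
  rw [Finset.sum_comm, ← μ.sum_one]
  refine Finset.sum_congr rfl fun ω _ => ?_
  simp


open Classical in
lemma H_congr {α β : Type*} [Fintype α] [Fintype β] (X : Ω → α) (Y : Ω → β)
    (f : α → β) (g : β → α) (hf : ∀ ω, Y ω = f (X ω)) (hg : ∀ ω, X ω = g (Y ω)) :
    H μ Y = H μ X := by
  classical
  set s : Finset α := univ.filter (fun a => ∃ ω, X ω = a) with hs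
  have hmem : ∀ a, a ∈ s ↔ ∃ ω, X ω = a := by intro a; simp [hs]
  have hgf : ∀ a ∈ s, g (f a) = a := by
    intro a ha
    obtain ⟨ω, rfl⟩ := (hmem _).1 ha
    rw [← hf, ← hg]
  have hdX0 : ∀ a ∉ s, dist μ X a = 0 := by
    intro a ha
    rw [dist_eq]
    refine Finset.sum_eq_zero fun ω _ => ?_
    rw [if_neg]
    exact fun h => ha ((hmem _).2 ⟨ω, h⟩)
  have hdY0 : ∀ b ∉ s.image f, dist μ Y b = 0 := by
    intro b hb
    rw [dist_eq]
    refine Finset.sum_eq_zero fun ω _ => ?_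
    rw [if_neg]
    intro h
    exact hb (Finset.mem_image.2 ⟨X ω, (hmem _).2 ⟨ω, rfl⟩, by rw [← hf, h]⟩)
  have hdXY : ∀ a ∈ s, dist μ Y (f a) = dist μ X a := by
    intro a ha
    rw [dist_eq, dist_eq]
    refine Finset.sum_congr rfl fun ω _ => ?_
    congr 1
    apply propext
    constructor
    · intro h
      have := hg ω
      rw [h, hgf a ha] at this
      exact this
    · intro h
      rw [hf, h]
  unfold H
  congr 1
  rw [← Finset.sum_subset (Finset.subset_univ (s.image f))
    (fun b _ hb => by rw [hdY0 b hb]; simp),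
    ← Finset.sum_subset (Finset.subset_univ s)
    (fun a _ ha => by rw [hdX0 a ha]; simp)]
  rw [Finset.sum_image (f := fun b => dist μ Y b * Real.logb 2 (dist μ Y b))]
  · exact Finset.sum_congr rfl fun a ha => by rw [hdXY a ha]
  · intro a ha a' ha' hff
    rw [← hgf a ha, ← hgf a' ha', hff]

lemma H_unit : H μ (fun _ => ()) = 0 := by
  classical
  simp [H, dist_eq, μ.sum_one]


lemma key_ineq {p q r s : ℝ} (hp : 0 ≤ p) (hq : p ≤ q) (hr : p ≤ r) (hs : q ≤ s) :
    p * (Real.logb 2 q + Real.logb 2 r - Real.logb 2 p - Real.logb 2 s)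
      ≤ (q * r / s - p) / Real.log 2 := by
  have hlog2 : 0 < Real.log 2 := Real.log_pos one_lt_two
  rcases eq_or_lt_of_le hp with h0 | h0
  · have hq0 : 0 ≤ q := hp.trans hq
    have hr0 : 0 ≤ r := hp.trans hr
    have hs0 : 0 ≤ s := hq0.trans hs
    rw [← h0, zero_mul, sub_zero]
    positivity
  · have hq0 : 0 < q := h0.trans_le hq
    have hr0 : 0 < r := h0.trans_le hr
    have hs0 : 0 < s := hq0.trans_le hs
    have ht : (0:ℝ) < q * r / (p * s) := by positivity
    have hlog : Real.log (q * r / (p * s)) ≤ q * r / (p * s) - 1 :=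
      Real.log_le_sub_one_of_pos ht
    have expand : Real.logb 2 q + Real.logb 2 r - Real.logb 2 p - Real.logb 2 s
        = Real.log (q * r / (p * s)) / Real.log 2 := by
      rw [Real.log_div (by positivity) (by positivity),
        Real.log_mul hq0.ne' hr0.ne', Real.log_mul h0.ne' hs0.ne']
      simp only [Real.logb]
      ring
    rw [expand]
    calc p * (Real.log (q * r / (p * s)) / Real.log 2)
        ≤ p * ((q * r / (p * s) - 1) / Real.log 2) := by
          apply mul_le_mul_of_nonneg_left _ hp
          exact div_le_div_of_nonneg_right hlog hlog2.le
      _ = (q * r / s - p) / Real.log 2 := by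
          field_simp


section Marg

variable {A B C : Type*} [Fintype A] [Fintype B] [Fintype C]
variable (X : Ω → A) (Y : Ω → B) (Z : Ω → C)

lemma mar_xz (x : A) (z : C) :
    ∑ y, dist μ (fun ω => (X ω, Y ω, Z ω)) (x, y, z) = dist μ (fun ω => (X ω, Z ω)) (x, z) := by
  classical
  simp_rw [dist_eq]
  rw [Finset.sum_comm]
  refine Finset.sum_congr rfl fun ω _ => ?_
  by_cases hx : X ω = x <;> by_cases hz : Z ω = z <;>
    simp [Prod.ext_iff, hx, hz]

lemma mar_yz (y : B) (z : C) :
    ∑ x, dist μ (fun ω => (X ω, Y ω, Z ω)) (x, y, z) = dist μ (fun ω => (Y ω, Z ω)) (y, z) := by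
  classical
  simp_rw [dist_eq]
  rw [Finset.sum_comm]
  refine Finset.sum_congr rfl fun ω _ => ?_
  by_cases hy : Y ω = y <;> by_cases hz : Z ω = z <;>
    simp [Prod.ext_iff, hy, hz]

lemma mar_z (z : C) :
    ∑ x, dist μ (fun ω => (X ω, Z ω)) (x, z) = dist μ Z z := by
  classical
  simp_rw [dist_eq]
  rw [Finset.sum_comm]
  refine Finset.sum_congr rfl fun ω _ => ?_
  by_cases hz : Z ω = z <;> simp [Prod.ext_iff, hz]

lemma submod :
    H μ (fun ω => (X ω, Y ω, Z ω)) + H μ Z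
      ≤ H μ (fun ω => (X ω, Z ω)) + H μ (fun ω => (Y ω, Z ω)) := by
  classical
  set P := fun (x : A) (y : B) (z : C) => dist μ (fun ω => (X ω, Y ω, Z ω)) (x, y, z) with hP
  set PXZ := fun (x : A) (z : C) => dist μ (fun ω => (X ω, Z ω)) (x, z) with hPXZ
  set PYZ := fun (y : B) (z : C) => dist μ (fun ω => (Y ω, Z ω)) (y, z) with hPYZ
  set PZ := fun (z : C) => dist μ Z z with hPZ
  have hP0 : ∀ x y z, 0 ≤ P x y z := fun x y z => dist_nonneg' μ _ _
  have hPXZ0 : ∀ x z, 0 ≤ PXZ x z := fun x z => dist_nonneg' μ _ _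
  have hPYZ0 : ∀ y z, 0 ≤ PYZ y z := fun y z => dist_nonneg' μ _ _
  have hPZ0 : ∀ z, 0 ≤ PZ z := fun z => dist_nonneg' μ _ _
  have hxz : ∀ x z, ∑ y, P x y z = PXZ x z := fun x z => mar_xz μ X Y Z x z
  have hyz : ∀ y z, ∑ x, P x y z = PYZ y z := fun y z => mar_yz μ X Y Z y z
  have hzx : ∀ z, ∑ x, PXZ x z = PZ z := fun z => mar_z μ X Z z
  have hzy : ∀ z, ∑ y, PYZ y z = PZ z := fun z => mar_z μ Y Z z
  have hle1 : ∀ x y z, P x y z ≤ PXZ x z := fun x y z =>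
    (hxz x z) ▸ Finset.single_le_sum (fun y _ => hP0 x y z) (Finset.mem_univ y)
  have hle2 : ∀ x y z, P x y z ≤ PYZ y z := fun x y z =>
    (hyz y z) ▸ Finset.single_le_sum (fun x _ => hP0 x y z) (Finset.mem_univ x)
  have hle3 : ∀ x z, PXZ x z ≤ PZ z := fun x z =>
    (hzx z) ▸ Finset.single_le_sum (fun x _ => hPXZ0 x z) (Finset.mem_univ x)
  have reorder : ∀ Q : A → B → C → ℝ,
      (∑ x, ∑ y, ∑ z, Q x y z) = ∑ z, ∑ x, ∑ y, Q x y z := by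
    intro Q
    calc (∑ x, ∑ y, ∑ z, Q x y z) = ∑ x, ∑ z, ∑ y, Q x y z :=
          Finset.sum_congr rfl fun x _ => Finset.sum_comm
      _ = ∑ z, ∑ x, ∑ y, Q x y z := Finset.sum_comm
  have eW : H μ (fun ω => (X ω, Y ω, Z ω))
      = -∑ x, ∑ y, ∑ z, P x y z * Real.logb 2 (P x y z) := by
    unfold H
    simp only [Fintype.sum_prod_type]
    rfl
  have eXZ : H μ (fun ω => (X ω, Z ω))
      = -∑ x, ∑ y, ∑ z, P x y z * Real.logb 2 (PXZ x z) := by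
    unfold H
    simp only [Fintype.sum_prod_type]
    congr 1
    refine Finset.sum_congr rfl fun x _ => ?_
    rw [Finset.sum_comm]
    refine Finset.sum_congr rfl fun z _ => ?_
    rw [← Finset.sum_mul, hxz]
  have eYZ : H μ (fun ω => (Y ω, Z ω))
      = -∑ x, ∑ y, ∑ z, P x y z * Real.logb 2 (PYZ y z) := by
    unfold H
    simp only [Fintype.sum_prod_type]
    congr 1
    rw [show (∑ x, ∑ y, ∑ z, P x y z * Real.logb 2 (PYZ y z))
        = ∑ y, ∑ x, ∑ z, P x y z * Real.logb 2 (PYZ y z) from Finset.sum_comm]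
    refine Finset.sum_congr rfl fun y _ => ?_
    rw [show (∑ x, ∑ z, P x y z * Real.logb 2 (PYZ y z))
        = ∑ z, ∑ x, P x y z * Real.logb 2 (PYZ y z) from Finset.sum_comm]
    refine Finset.sum_congr rfl fun z _ => ?_
    rw [← Finset.sum_mul, hyz]
  have eZ : H μ Z = -∑ x, ∑ y, ∑ z, P x y z * Real.logb 2 (PZ z) := by
    unfold H
    rw [reorder fun x y z => P x y z * Real.logb 2 (PZ z)]
    congr 1
    refine Finset.sum_congr rfl fun z _ => ?_
    rw [show (∑ x, ∑ y, P x y z * Real.logb 2 (PZ z))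
        = (∑ x, ∑ y, P x y z) * Real.logb 2 (PZ z) by
      rw [Finset.sum_mul]
      exact Finset.sum_congr rfl fun x _ => by rw [Finset.sum_mul]]
    have hh : (∑ x, ∑ y, P x y z) = PZ z := by
      rw [← hzx z]
      exact Finset.sum_congr rfl fun x _ => hxz x z
    rw [hh]
  have hsumP : ∑ x, ∑ y, ∑ z, P x y z = 1 := by
    have := sum_dist μ (fun ω => (X ω, Y ω, Z ω))
    simpa only [Fintype.sum_prod_type] using this
  have hdiv : ∀ z, (∑ x, ∑ y, PXZ x z * PYZ y z / PZ z) ≤ PZ z := by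
    intro z
    by_cases h : PZ z = 0
    · have h1 : ∀ x, PXZ x z = 0 := fun x => le_antisymm (h ▸ hle3 x z) (hPXZ0 x z)
      simp only [h1, zero_mul, zero_div]
      simp [hPZ0 z]
    · have : (∑ x, ∑ y, PXZ x z * PYZ y z / PZ z)
          = (∑ x, PXZ x z) * (∑ y, PYZ y z) / PZ z := by
        rw [Finset.sum_mul, Finset.sum_div]
        refine Finset.sum_congr rfl fun x _ => ?_
        rw [Finset.mul_sum, Finset.sum_div]
      rw [this, hzx, hzy, mul_div_assoc, div_self h, mul_one]
  have hq1 : (∑ x, ∑ y, ∑ z, PXZ x z * PYZ y z / PZ z) ≤ 1 := by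
    rw [reorder fun x y z => PXZ x z * PYZ y z / PZ z]
    calc (∑ z, ∑ x, ∑ y, PXZ x z * PYZ y z / PZ z) ≤ ∑ z, PZ z :=
          Finset.sum_le_sum fun z _ => hdiv z
      _ = 1 := sum_dist μ Z
  have key : ∀ x y z,
      P x y z * (Real.logb 2 (PXZ x z) + Real.logb 2 (PYZ y z)
        - Real.logb 2 (P x y z) - Real.logb 2 (PZ z))
      ≤ (PXZ x z * PYZ y z / PZ z - P x y z) / Real.log 2 := fun x y z =>
    key_ineq (hP0 x y z) (hle1 x y z) (hle2 x y z) (hle3 x z)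
  have comb : (∑ x, ∑ y, ∑ z, P x y z * (Real.logb 2 (PXZ x z) + Real.logb 2 (PYZ y z)
        - Real.logb 2 (P x y z) - Real.logb 2 (PZ z)))
      ≤ ∑ x, ∑ y, ∑ z, (PXZ x z * PYZ y z / PZ z - P x y z) / Real.log 2 := by
    refine Finset.sum_le_sum fun x _ => Finset.sum_le_sum fun y _ =>
      Finset.sum_le_sum fun z _ => key x y z
  have hlog2 : 0 < Real.log 2 := Real.log_pos one_lt_two
  have rhs_le : (∑ x, ∑ y, ∑ z, (PXZ x z * PYZ y z / PZ z - P x y z) / Real.log 2) ≤ 0 := by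
    simp only [div_eq_mul_inv, sub_mul, Finset.sum_sub_distrib, ← Finset.sum_mul]
    rw [hsumP]
    have hq1' := hq1
    simp only [div_eq_mul_inv] at hq1'
    have h := mul_le_mul_of_nonneg_right hq1' (inv_nonneg.2 hlog2.le)
    linarith
  rw [eW, eXZ, eYZ, eZ]
  have hcomb0 := comb.trans rhs_le
  rw [show (∑ x, ∑ y, ∑ z, P x y z * (Real.logb 2 (PXZ x z) + Real.logb 2 (PYZ y z)
        - Real.logb 2 (P x y z) - Real.logb 2 (PZ z)))
      = (∑ x, ∑ y, ∑ z, P x y z * Real.logb 2 (PXZ x z))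
        + (∑ x, ∑ y, ∑ z, P x y z * Real.logb 2 (PYZ y z))
        - (∑ x, ∑ y, ∑ z, P x y z * Real.logb 2 (P x y z))
        - (∑ x, ∑ y, ∑ z, P x y z * Real.logb 2 (PZ z)) by
    simp only [mul_add, mul_sub, Finset.sum_add_distrib, Finset.sum_sub_distrib]] at hcomb0
  linarith

lemma subadd (X : Ω → A) (Y : Ω → B) :
    H μ (fun ω => (X ω, Y ω)) ≤ H μ X + H μ Y := by
  have h := submod μ X Y (fun _ => ())
  have e1 : H μ (fun ω => (X ω, Y ω, ())) = H μ (fun ω => (X ω, Y ω)) :=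
    H_congr μ (fun ω => (X ω, Y ω)) _ (fun p => (p.1, p.2, ())) (fun p => (p.1, p.2.1))
      (fun ω => rfl) (fun ω => rfl)
  have e2 : H μ (fun ω => (X ω, ())) = H μ X :=
    H_congr μ X _ (fun a => (a, ())) Prod.fst (fun ω => rfl) (fun ω => rfl)
  have e3 : H μ (fun ω => (Y ω, ())) = H μ Y :=
    H_congr μ Y _ (fun a => (a, ())) Prod.fst (fun ω => rfl) (fun ω => rfl)
  have e4 : H μ (fun _ : Ω => ()) = 0 := H_unit μ
  rw [e1, e2, e3, e4] at h
  linarith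

end Marg

section Main

variable {γ : Type*} [Fintype γ] {m : ℕ} {α : Fin m → Type*} [∀ i, Fintype (α i)]

/-- Prefix tuple: the first `k` of the `J`s, as an option-valued tuple. -/
def tupA (J : ∀ i, Ω → α i) (k : ℕ) (ω : Ω) : ∀ j : Fin m, Option (α j) :=
  fun j => if j.1 < k then some (J j ω) else none

/-- Suffix tuple: the `J j` with `j > i`. -/
def tupD (J : ∀ i, Ω → α i) (i : Fin m) (ω : Ω) : ∀ j : Fin m, Option (α j) :=
  fun j => if i.1 < j.1 then some (J j ω) else none

/-- All but `i`. -/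
def tupC (J : ∀ i, Ω → α i) (i : Fin m) (ω : Ω) : ∀ j : Fin m, Option (α j) :=
  fun j => if j = i then none else some (J j ω)

variable (μ : FinPMF Ω) (J : ∀ i, Ω → α i) (G : Ω → γ)

lemma L_A0 : H μ (tupA J 0) = H μ (fun _ => ()) := by
  refine H_congr μ (fun _ => ()) (tupA J 0) (fun _ _ => none) (fun _ => ()) ?_ ?_
  · intro ω; funext j; simp [tupA]
  · intro ω; rfl

lemma L_B0 : H μ (fun ω => (G ω, tupA J 0 ω)) = H μ G := by
  refine H_congr μ G _ (fun c => (c, fun _ => none)) Prod.fst ?_ ?_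
  · intro ω
    refine Prod.ext rfl ?_
    funext j; simp [tupA]
  · intro ω; rfl

lemma L_Am (d : ∀ i, α i) : H μ (fun ω (i : Fin m) => J i ω) = H μ (tupA J m) := by
  refine (H_congr μ (fun ω (i : Fin m) => J i ω) (tupA J m)
    (fun x j => some (x j)) (fun y j => (y j).getD (d j)) ?_ ?_).symm
  · intro ω; funext j; simp [tupA, j.isLt]
  · intro ω; funext j; simp [tupA, j.isLt]

lemma L_Bm (d : ∀ i, α i) :
    H μ (fun ω => ((fun i : Fin m => J i ω), G ω)) = H μ (fun ω => (G ω, tupA J m ω)) := by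
  refine H_congr μ _ _
    (fun p : γ × (∀ j : Fin m, Option (α j)) => ((fun j => (p.2 j).getD (d j)), p.1))
    (fun q : (∀ i : Fin m, α i) × γ => (q.2, fun j => some (q.1 j))) ?_ ?_
  · intro ω
    refine Prod.ext ?_ rfl
    funext j; simp [tupA, j.isLt]
  · intro ω
    refine Prod.ext rfl ?_
    funext j; simp [tupA, j.isLt]

lemma L_Astep (i : Fin m) (d : ∀ i, α i) :
    H μ (fun ω => (J i ω, tupA J i.1 ω)) = H μ (tupA J (i.1 + 1)) := by
  refine (H_congr μ (fun ω => (J i ω, tupA J i.1 ω)) (tupA J (i.1 + 1))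
    (fun p j => if h : j = i then some (cast (congrArg α h.symm) p.1) else p.2 j)
    (fun y => ((y i).getD (d i), fun j => if j.1 < i.1 then y j else none)) ?_ ?_).symm
  · intro ω
    funext j
    by_cases h : j = i
    · subst h
      simp [tupA]
    · have hne : j.1 ≠ i.1 := fun hh => h (Fin.ext hh)
      simp only [tupA]
      rw [dif_neg h, if_congr (show j.1 < i.1 + 1 ↔ j.1 < i.1 by omega) rfl rfl]
  · intro ω
    refine Prod.ext ?_ ?_
    · simp [tupA]
    · funext j
      by_cases hlt : j.1 < i.1
      · simp [tupA, hlt, Nat.lt_succ_of_lt hlt]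
      · simp [tupA, hlt]

lemma L_Bstep (i : Fin m) (d : ∀ i, α i) :
    H μ (fun ω => (J i ω, (G ω, tupA J i.1 ω)))
      = H μ (fun ω => (G ω, tupA J (i.1 + 1) ω)) := by
  refine (H_congr μ (fun ω => (J i ω, (G ω, tupA J i.1 ω)))
    (fun ω => (G ω, tupA J (i.1 + 1) ω))
    (fun p => (p.2.1, fun j => if h : j = i then some (cast (congrArg α h.symm) p.1)
      else p.2.2 j))
    (fun q => ((q.2 i).getD (d i), (q.1, fun j => if j.1 < i.1 then q.2 j else none)))
    ?_ ?_).symm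
  · intro ω
    refine Prod.ext rfl ?_
    funext j
    by_cases h : j = i
    · subst h
      simp [tupA]
    · have hne : j.1 ≠ i.1 := fun hh => h (Fin.ext hh)
      simp only [tupA]
      rw [dif_neg h, if_congr (show j.1 < i.1 + 1 ↔ j.1 < i.1 by omega) rfl rfl]
  · intro ω
    refine Prod.ext ?_ (Prod.ext rfl ?_)
    · simp [tupA]
    · funext j
      by_cases hlt : j.1 < i.1
      · simp [tupA, hlt, Nat.lt_succ_of_lt hlt]
      · simp [tupA, hlt]

lemma pw_split (i : Fin m) (ω : Ω) (j : Fin m) :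
    tupC J i ω j = if j.1 < i.1 then tupA J i.1 ω j else tupD J i ω j := by
  by_cases h : j = i
  · subst h
    simp [tupC, tupD]
  · have hne : j.1 ≠ i.1 := fun hh => h (Fin.ext hh)
    by_cases hlt : j.1 < i.1
    · simp [tupC, tupA, h, hlt]
    · simp [tupC, tupD, h, hlt, show i.1 < j.1 by omega]

lemma pw_D (i : Fin m) (ω : Ω) (j : Fin m) :
    tupD J i ω j = if i.1 < j.1 then tupC J i ω j else none := by
  by_cases h : i.1 < j.1
  · have hne : j ≠ i := fun hh => by subst hh; omega
    simp [tupD, tupC, h, hne]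
  · simp [tupD, h]

lemma pw_A (i : Fin m) (ω : Ω) (j : Fin m) :
    tupA J i.1 ω j = if j.1 < i.1 then tupC J i ω j else none := by
  by_cases h : j.1 < i.1
  · have hne : j ≠ i := fun hh => by subst hh; omega
    simp [tupA, tupC, h, hne]
  · simp [tupA, h]

lemma L_DB (i : Fin m) :
    H μ (fun ω => (G ω, tupC J i ω))
      = H μ (fun ω => (tupD J i ω, (G ω, tupA J i.1 ω))) := by
  refine H_congr μ _ _
    (fun p => (p.2.1, fun j => if j.1 < i.1 then p.2.2 j else p.1 j))
    (fun q => ((fun j => if i.1 < j.1 then q.2 j else none),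
      (q.1, fun j => if j.1 < i.1 then q.2 j else none))) ?_ ?_
  · intro ω
    refine Prod.ext rfl ?_
    funext j
    exact pw_split J i ω j
  · intro ω
    refine Prod.ext ?_ (Prod.ext rfl ?_)
    · funext j
      exact pw_D J i ω j
    · funext j
      exact pw_A J i ω j

lemma L_C (i : Fin m) (d : ∀ i, α i) :
    H μ (fun ω => (G ω, fun j : {j : Fin m // j ≠ i} => J j.1 ω))
      = H μ (fun ω => (G ω, tupC J i ω)) := by
  refine H_congr μ _ _
    (fun q => (q.1, fun j : {j : Fin m // j ≠ i} => (q.2 j.1).getD (d j.1)))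
    (fun y => (y.1, fun j => if h : j = i then none else some (y.2 ⟨j, h⟩))) ?_ ?_
  · intro ω
    refine Prod.ext rfl ?_
    funext j
    simp [tupC, j.2]
  · intro ω
    refine Prod.ext rfl ?_
    funext j
    by_cases h : j = i <;> simp [tupC, h]

lemma L_joint (i : Fin m) (d : ∀ i, α i) :
    H μ (fun ω => (J i ω, (G ω, fun j : {j : Fin m // j ≠ i} => J j.1 ω)))
      = H μ (fun ω => (J i ω, (tupD J i ω, (G ω, tupA J i.1 ω)))) := by
  refine H_congr μ _ _
    (fun p => (p.1, (p.2.2.1, fun j : {j : Fin m // j ≠ i} =>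
      (if j.1.1 < i.1 then p.2.2.2 j.1 else p.2.1 j.1).getD (d j.1))))
    (fun q => (q.1,
      ((fun j => if i.1 < j.1 then
          (if h : j = i then none else some (q.2.2 ⟨j, h⟩)) else none),
        (q.2.1, fun j => if j.1 < i.1 then
          (if h : j = i then none else some (q.2.2 ⟨j, h⟩)) else none)))) ?_ ?_
  · intro ω
    refine Prod.ext rfl (Prod.ext rfl ?_)
    funext j
    show J j.1 ω = (if j.1.1 < i.1 then tupA J i.1 ω j.1 else tupD J i ω j.1).getD (d j.1)
    rw [← pw_split J i ω j.1]
    simp [tupC, j.2]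
  · intro ω
    refine Prod.ext rfl (Prod.ext ?_ (Prod.ext rfl ?_))
    · funext j
      by_cases h : j = i
      · subst h
        simp [tupD]
      · simp only [dif_neg h]
        rw [pw_D J i ω j]
        by_cases h2 : i.1 < j.1 <;> simp [h2, tupC, h]
    · funext j
      by_cases h : j = i
      · subst h
        simp [tupA]
      · simp only [dif_neg h]
        rw [pw_A J i ω j]
        by_cases h2 : j.1 < i.1 <;> simp [h2, tupC, h]

lemma per_i (i : Fin m) (d : ∀ i, α i) :
    (H μ (tupA J (i.1 + 1)) - H μ (fun ω => (G ω, tupA J (i.1 + 1) ω)))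
      - (H μ (tupA J i.1) - H μ (fun ω => (G ω, tupA J i.1 ω)))
      ≤ mutInf μ (J i) (fun ω => (G ω, fun j : {j : Fin m // j ≠ i} => J j.1 ω)) := by
  have eA := L_Astep μ J i d
  have eB := L_Bstep μ J G i d
  have eDB := L_DB μ J G i
  have eC := L_C μ J G i d
  have eJ := L_joint μ J G i d
  have hsub := subadd μ (J i) (tupA J i.1)
  have hmod := submod μ (J i) (tupD J i) (fun ω => (G ω, tupA J i.1 ω))
  unfold mutInf
  linarith

theorem main_stmt :
    mutInf μ (fun ω i => J i ω) G
      ≤ ∑ i : Fin m, mutInf μ (J i)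
          (fun ω => (G ω, fun j : {j : Fin m // j ≠ i} => J j.1 ω)) := by
  classical
  rcases isEmpty_or_nonempty Ω with hE | hNE
  · have h1 := μ.sum_one
    rw [Finset.univ_eq_empty, Finset.sum_empty] at h1
    norm_num at h1
  · have d : ∀ i, α i := fun i => J i (Classical.arbitrary Ω)
    have tel : ∑ i : Fin m,
        ((H μ (tupA J (i.1 + 1)) - H μ (fun ω => (G ω, tupA J (i.1 + 1) ω)))
          - (H μ (tupA J i.1) - H μ (fun ω => (G ω, tupA J i.1 ω))))
        = (H μ (tupA J m) - H μ (fun ω => (G ω, tupA J m ω)))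
          - (H μ (tupA J 0) - H μ (fun ω => (G ω, tupA J 0 ω))) := by
      rw [Fin.sum_univ_eq_sum_range (fun k =>
        (H μ (tupA J (k + 1)) - H μ (fun ω => (G ω, tupA J (k + 1) ω)))
          - (H μ (tupA J k) - H μ (fun ω => (G ω, tupA J k ω)))) m]
      exact Finset.sum_range_sub
        (fun k => H μ (tupA J k) - H μ (fun ω => (G ω, tupA J k ω))) m
    have hLHS : mutInf μ (fun ω i => J i ω) G
        = (H μ (tupA J m) - H μ (fun ω => (G ω, tupA J m ω)))
          - (H μ (tupA J 0) - H μ (fun ω => (G ω, tupA J 0 ω))) := by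
      unfold mutInf
      rw [L_Am μ J d, L_Bm μ J G d, L_A0 μ J, L_B0 μ J G, H_unit μ]
      ring
    rw [hLHS, ← tel]
    exact Finset.sum_le_sum fun i _ => per_i μ J G i d

end Main


end SC



/-- I((J_1,…,J_m) ∧ G) ≤ Σ_i I(J_i ∧ (G, J_{M∖{i}})). -/
theorem stmt_1 {Ω γ : Type*} [Fintype Ω] [Fintype γ] {m : ℕ}
    {α : Fin m → Type*} [∀ i, Fintype (α i)]
    (μ : SC.FinPMF Ω) (J : ∀ i, Ω → α i) (G : Ω → γ) :
    SC.mutInf μ (fun ω i => J i ω) G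
      ≤ ∑ i : Fin m, SC.mutInf μ (J i)
          (fun ω => (G ω, fun j : {j : Fin m // j ≠ i} => J j.1 ω)) := by
  exact SC.main_stmt μ J G
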